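/- Suppose S=(s_i) is a good orientable sequence of order n with odd weight and period m, and let T ∈ D^{-1}(S). Then E(T) is a good orientable sequence of order n+1 of odd weight, whose period is 2m if m is odd and 2m+1 if m is even. -/

import Mathlib

/-- A sequence has `m` as a (not necessarily least) period. -/
def hasPer (s : ℕ → Bool) (m : ℕ) : Prop := ∀ i, s (i + m) = s i

/-- `m` is the (least positive) period of `s`. -/
def isPeriod (s : ℕ → Bool) (m : ℕ) : Prop :=
  0 < m ∧ hasPer s m ∧ ∀ k, 0 < k → hasPer s k → m ≤ k

/-- The `n`-tuple appearing at position `i` of `s`. -/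
def tup (s : ℕ → Bool) (n i : ℕ) : Fin n → Bool := fun k => s (i + (k : ℕ))

/-- The reverse of an `n`-tuple. -/
def tupRev {n : ℕ} (u : Fin n → Bool) : Fin n → Bool := fun k => u k.rev

/-- An `n`-window sequence of period `m`. -/
def isNWindow (s : ℕ → Bool) (n m : ℕ) : Prop :=
  isPeriod s m ∧ ∀ i j, tup s n i = tup s n j → i ≡ j [MOD m]

/-- The weight of (one period of) `s`. -/
def wt (s : ℕ → Bool) (m : ℕ) : ℕ := ∑ i ∈ Finset.range m, (if s i then 1 else 0)

/-- The complement of a sequence. -/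
def seqCompl (s : ℕ → Bool) : ℕ → Bool := fun i => !(s i)

/-- Two sequences are disjoint if they share no `n`-tuple. -/
def disjointSeq (s t : ℕ → Bool) (n : ℕ) : Prop := ∀ i j, tup s n i ≠ tup t n j

/-- A sequence is primitive if it is disjoint from its complement. -/
def primitiveSeq (s : ℕ → Bool) (n : ℕ) : Prop := disjointSeq s (seqCompl s) n

/-- An orientable sequence of order `n` and period `m`. -/
def isOrientable (s : ℕ → Bool) (n m : ℕ) : Prop :=
  isNWindow s n m ∧ ∀ i j, tup s n i ≠ tupRev (tup s n j)

/-- Two sequences are o-disjoint: disjoint, and no `n`-tuple of one is the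
reverse of an `n`-tuple of the other. -/
def oDisjoint (s t : ℕ → Bool) (n : ℕ) : Prop :=
  disjointSeq s t n ∧ ∀ i j, tup s n i ≠ tupRev (tup t n j)

/-- The Lempel homomorphism `D` on periodic sequences. -/
def Dmap (t : ℕ → Bool) : ℕ → Bool := fun i => xor (t i) (t (i + 1))

/-- The set `D⁻¹(s)` of sequences mapping to `s` under `D`. -/
def Dinv (s : ℕ → Bool) : Set (ℕ → Bool) := { t | Dmap t = s }

/-- `1^len` occurs at position `i` of `s`. -/
def occOnes (s : ℕ → Bool) (len i : ℕ) : Prop := ∀ k, k < len → s (i + k) = true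

/-- `0^len` occurs at position `i` of `s`. -/
def occZeros (s : ℕ → Bool) (len i : ℕ) : Prop := ∀ k, k < len → s (i + k) = false

/-- The periodic sequence of period dividing `m + 1` obtained from the generating cycle
`[s_0, ..., s_{r-1}, 1, s_r, ..., s_{m-1}]`, i.e. by inserting an extra `1` at
position `r` of the generating cycle `[s_0, ..., s_{m-1}]`. -/
def insertAt (s : ℕ → Bool) (m r : ℕ) : ℕ → Bool := fun i =>
  if i % (m + 1) < r then s (i % (m + 1))
  else if i % (m + 1) = r then true
  else s (i % (m + 1) - 1)

/-- A good orientable sequence: an `OS(n)` of period `m` in which the tuple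
`0^(n-4)` occurs exactly once in a period. -/
def goodOS (s : ℕ → Bool) (n m : ℕ) : Prop :=
  isOrientable s n m ∧ ∃! i, i < m ∧ occZeros s (n - 4) i

private lemma tup_eq_iff {f g : ℕ → Bool} {K i j : ℕ} :
    tup f K i = tup g K j ↔ ∀ k, k < K → f (i + k) = g (j + k) := by
  constructor
  · intro h k hk; exact congrFun h ⟨k, hk⟩
  · intro h; funext k; exact h k k.isLt

private lemma tup_rev_eq_iff {f g : ℕ → Bool} {K i j : ℕ} :
    tup f K i = tupRev (tup g K j) ↔ ∀ k, k < K → f (i + k) = g (j + (K - 1 - k)) := by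
  have e : ∀ k : ℕ, K - 1 - k = K - (k + 1) := by omega
  constructor
  · intro h k hk
    have := congrFun h ⟨k, hk⟩
    rw [e]
    simpa [tup, tupRev, Fin.rev] using this
  · intro h; funext k
    have := h k k.isLt
    rw [e] at this
    simpa [tup, tupRev, Fin.rev] using this

private lemma perMul {f : ℕ → Bool} {p : ℕ} (h : hasPer f p) : ∀ x q, f (x + q * p) = f x := by
  intro x q
  induction q with
  | zero => simp
  | succ q ih => have := h (x + q * p); rw [Nat.succ_mul, ← Nat.add_assoc, this, ih]

private lemma perCong {f : ℕ → Bool} {p : ℕ} (h : hasPer f p) (hp : 0 < p) :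
    ∀ x y, x % p = y % p → f x = f y := by
  have hm : ∀ x, f x = f (x % p) := by
    intro x
    conv_lhs => rw [← Nat.mod_add_div' x p]
    exact perMul h (x % p) (x / p)
  intro x y hxy
  rw [hm x, hm y, hxy]



set_option maxHeartbeats 1600000 in
/-- Theorem 5: if `S` is a good orientable sequence of order `n`, odd weight and
period `m`, and `T ∈ D⁻¹(S)` (so `T` has period `2m`, in which `1^((n+1)-4)`
occurs exactly once, say at position `r`), then `E(T)` is a good orientable
sequence of order `n+1` of odd weight and of period `2m` if `m` is odd and
`2m+1` if `m` is even. -/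
theorem extension_good (n m : ℕ) (s t : ℕ → Bool)
    (hgood : goodOS s n m) (hodd : Odd (wt s m)) (ht : t ∈ Dinv s) :
    ∃ r, r < 2 * m ∧ occOnes t (n + 1 - 4) r ∧
      (∀ i, i < 2 * m → occOnes t (n + 1 - 4) i → i = r) ∧
      goodOS (if Odd (wt t (2 * m)) then t else insertAt t (2 * m) r) (n + 1)
        (if Odd m then 2 * m else 2 * m + 1) ∧
      Odd (wt (if Odd (wt t (2 * m)) then t else insertAt t (2 * m) r)
        (if Odd m then 2 * m else 2 * m + 1)) := by
  obtain ⟨⟨⟨⟨hm0, hsper, hsmin⟩, hswin⟩, hsorient⟩, hex⟩ := hgood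
  obtain ⟨i0, ⟨hi0m, hi0zz⟩, hi0uu⟩ := hex
  have hDt : ∀ i, xor (t i) (t (i + 1)) = s i := fun i => congrFun ht i
  have hmne1 : m ≠ 1 := by
    intro h
    have hconst : ∀ j, s j = s 0 := by
      intro j
      induction j with
      | zero => rfl
      | succ j ih =>
        have hp := hsper j
        rw [h] at hp
        rw [hp, ih]
    exact hsorient 0 0 (tup_rev_eq_iff.mpr (fun k hk => by rw [hconst (0 + k), hconst (0 + (n - 1 - k))]))
  have hn5 : 5 ≤ n := by
    by_contra hlt
    have h0 : n - 4 = 0 := by omega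
    apply hmne1
    by_contra hm'
    have hz : ∀ y : ℕ, occZeros s (n - 4) y := by
      intro y k hk; rw [h0] at hk; omega
    have h0' : (0:ℕ) = i0 := hi0uu 0 ⟨by omega, hz 0⟩
    have h1' : (1:ℕ) = i0 := hi0uu 1 ⟨by omega, hz 1⟩
    omega
  obtain ⟨N, hn⟩ : ∃ N, n = N + 4 := ⟨n - 4, by omega⟩
  have hN : 1 ≤ N := by omega
  have hi0z : occZeros s N i0 := by rw [show N = n - 4 from by omega]; exact hi0zz
  have hi0u : ∀ y, y < m ∧ occZeros s N y → y = i0 := by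
    intro y hy
    exact hi0uu y ⟨hy.1, by rw [show n - 4 = N from by omega]; exact hy.2⟩
  have tsucc : ∀ i, t (i + 1) = xor (t i) (s i) := by
    intro i
    have h := hDt i
    revert h
    cases t i <;> cases t (i + 1) <;> cases s i <;> simp
  have sxor : ∀ i, s i = xor (t i) (t (i + 1)) := fun i => (hDt i).symm
  have wsum : ∀ k, t k = xor (t 0) (decide (Odd (wt s k))) := by
    intro k
    induction k with
    | zero => simp [wt, Nat.odd_iff]
    | succ k ih =>
      rw [tsucc k, ih]
      have e : wt s (k + 1) = wt s k + (if s k then 1 else 0) := Finset.sum_range_succ _ _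
      rw [e]
      cases h : s k
      · simp [h]
      · simp only [if_true, Nat.odd_add_one, ← Nat.not_odd_iff_even, decide_not]
        cases t 0 <;> cases hd : decide (Odd (wt s k)) <;> simp [hd]
  have todd : t m = !(t 0) := by
    rw [wsum m, decide_eq_true hodd]
    cases t 0 <;> simp
  have txm : ∀ i, xor (t i) (t (i + m)) = true := by
    intro i
    induction i with
    | zero => rw [Nat.zero_add, todd]; cases t 0 <;> simp
    | succ i ih =>
      have e : i + 1 + m = (i + m) + 1 := by omega
      rw [e, tsucc (i + m), tsucc i, hsper i]
      revert ih; cases t i <;> cases t (i + m) <;> cases s i <;> simp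
  have tflip : ∀ i, t (i + m) = !(t i) := by
    intro i
    have h := txm i
    revert h
    cases t i <;> cases t (i + m) <;> simp
  have tper : hasPer t (2 * m) := by
    intro i
    have e : i + 2 * m = (i + m) + m := by omega
    rw [e, tflip (i + m), tflip i, Bool.not_not]

  have h2m : 0 < 2 * m := by omega
  have scong : ∀ x y, x % m = y % m → s x = s y := perCong hsper hm0
  have tcong : ∀ x y, x % (2 * m) = y % (2 * m) → t x = t y := perCong tper h2m
  have tmul : ∀ x q, t (x + q * (2 * m)) = t x := perMul tper
  have swin' : ∀ i j, (∀ k, k < n → s (i + k) = s (j + k)) → i % m = j % m := by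
    intro i j h
    have : i ≡ j [MOD m] := hswin i j (tup_eq_iff.mpr h)
    exact this
  have sorient' : ∀ i j, (∀ k, k < n → s (i + k) = s (j + (n - 1 - k))) → False :=
    fun i j h => hsorient i j (tup_rev_eq_iff.mpr h)
  have tnoflip : ∀ a b, b = a + m → t a = t b → False := by
    intro a b hb hab
    rw [hb, tflip a] at hab
    revert hab; cases t a <;> simp
  have key2m : ∀ a b, a < 2 * m → b < 2 * m → a % m = b % m → t a = t b → a = b := by
    have half : ∀ a b, a ≤ b → a < 2 * m → b < 2 * m → a % m = b % m → t a = t b → a = b := by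
      intro a b hab ha hb hm htt
      have hdvd : m ∣ b - a := (Nat.modEq_iff_dvd' hab).mp hm
      obtain ⟨q, hq⟩ := hdvd
      have hq1 : q ≤ 1 := by
        by_contra hq2
        have : m * 2 ≤ m * q := Nat.mul_le_mul_left m (by omega)
        omega
      interval_cases q
      · omega
      · exact absurd (tnoflip a b (by omega) htt) id
    intro a b ha hb hm htt
    rcases le_total a b with h | h
    · exact half a b h ha hb hm htt
    · exact (half b a h hb ha hm.symm htt.symm).symm
  have twin : ∀ i j, (∀ k, k ≤ n → t (i + k) = t (j + k)) → i % (2 * m) = j % (2 * m) := by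
    intro i j h
    have hs : ∀ k, k < n → s (i + k) = s (j + k) := by
      intro k hk
      rw [sxor (i + k), sxor (j + k)]
      have e1 : i + k + 1 = i + (k + 1) := by omega
      have e2 : j + k + 1 = j + (k + 1) := by omega
      rw [e1, e2, h k (by omega), h (k + 1) (by omega)]
    have hmm : i % m = j % m := swin' i j hs
    have ha : i % (2 * m) < 2 * m := Nat.mod_lt _ h2m
    have hb : j % (2 * m) < 2 * m := Nat.mod_lt _ h2m
    have ham : i % (2 * m) % m = j % (2 * m) % m := by
      rw [Nat.mod_mod_of_dvd i (dvd_mul_left m 2), Nat.mod_mod_of_dvd j (dvd_mul_left m 2)]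
      exact hmm
    have htt : t (i % (2 * m)) = t (j % (2 * m)) := by
      have e1 : t (i % (2 * m)) = t i := tcong _ _ (Nat.mod_modEq i (2 * m))
      have e2 : t (j % (2 * m)) = t j := tcong _ _ (Nat.mod_modEq j (2 * m))
      have e3 := h 0 (by omega)
      simpa [e1, e2] using e3
    exact key2m _ _ ha hb ham htt
  have torient : ∀ i j, (∀ k, k ≤ n → t (i + k) = t (j + (n - k))) → False := by
    intro i j h
    apply sorient' i j
    intro k hk
    rw [sxor (i + k), sxor (j + (n - 1 - k))]
    have e1 : i + k + 1 = i + (k + 1) := by omega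
    have e2 : j + (n - 1 - k) + 1 = j + (n - k) := by omega
    have e3 : n - 1 - k = n - (k + 1) := by omega
    rw [e2, e3, e1, h k (by omega), h (k + 1) (by omega)]
    exact Bool.xor_comm _ _
  -- location of zero runs in s
  have zpos : ∀ x, occZeros s N x → x % m = i0 := by
    intro x hx
    apply hi0u
    refine ⟨Nat.mod_lt _ hm0, ?_⟩
    intro k hk
    rw [scong (x % m + k) (x + k) ((Nat.mod_modEq x m).add_right k)]
    exact hx k hk
  have zall : ∀ x, x % m = i0 → occZeros s N x := by
    intro x hx k hk
    have hcong : (x + k) % m = (i0 + k) % m := by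
      have : x % m = i0 % m := by rw [hx, Nat.mod_eq_of_lt hi0m]
      exact Nat.ModEq.add_right k this
    rw [scong (x + k) (i0 + k) hcong]
    exact hi0z k hk
  have trun0 : ∀ x, occZeros s N x → ∀ k, k ≤ N → t (x + k) = t x := by
    intro x hx k
    induction k with
    | zero => simp
    | succ k ih =>
      intro hk
      have e : x + (k + 1) = (x + k) + 1 := by omega
      rw [e, tsucc (x + k), hx k (by omega), ih (by omega), Bool.xor_false]
  set r := if t i0 = true then i0 else i0 + m with hr
  set z0 := if t i0 = true then i0 + m else i0 with hz0
  have htr : t r = true := by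
    rw [hr]; cases h : t i0 <;> simp [h, tflip i0]
  have htz0 : t z0 = false := by
    rw [hz0]; cases h : t i0 <;> simp [h, tflip i0]
  have hrm : r < 2 * m := by rw [hr]; split <;> omega
  have hz0m : z0 < 2 * m := by rw [hz0]; split <;> omega
  have hrmod : r % m = i0 := by
    rw [hr]; split
    · exact Nat.mod_eq_of_lt hi0m
    · rw [Nat.add_mod_right]; exact Nat.mod_eq_of_lt hi0m
  have hz0mod : z0 % m = i0 := by
    rw [hz0]; split
    · rw [Nat.add_mod_right]; exact Nat.mod_eq_of_lt hi0m
    · exact Nat.mod_eq_of_lt hi0m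
  have hrz : occZeros s N r := zall r hrmod
  have hz0z : occZeros s N z0 := zall z0 hz0mod
  have tones : ∀ k, k ≤ N → t (r + k) = true := fun k hk => (trun0 r hrz k hk).trans htr
  have tzeros : ∀ k, k ≤ N → t (z0 + k) = false := fun k hk => (trun0 z0 hz0z k hk).trans htz0
  have runloc : ∀ i, t i = true → occZeros s N i → i % (2 * m) = r := by
    intro i hti hz
    have him : i % m = i0 := zpos i hz
    have ham : i % (2 * m) % m = i0 := by
      rw [Nat.mod_mod_of_dvd i (dvd_mul_left m 2)]; exact him
    have hti2 : t (i % (2 * m)) = true := by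
      rw [tcong (i % (2 * m)) i (Nat.mod_modEq i (2 * m))]; exact hti
    have hrr : r % m = i % (2 * m) % m := by rw [ham, hrmod]
    exact (key2m r (i % (2 * m)) hrm (Nat.mod_lt _ h2m) hrr (by rw [htr, hti2])).symm
  have zeroloc : ∀ i, t i = false → occZeros s N i → i % (2 * m) = z0 := by
    intro i hti hz
    have him : i % m = i0 := zpos i hz
    have ham : i % (2 * m) % m = i0 := by
      rw [Nat.mod_mod_of_dvd i (dvd_mul_left m 2)]; exact him
    have hti2 : t (i % (2 * m)) = false := by
      rw [tcong (i % (2 * m)) i (Nat.mod_modEq i (2 * m))]; exact hti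
    have hrr : z0 % m = i % (2 * m) % m := by rw [ham, hz0mod]
    exact (key2m z0 (i % (2 * m)) hz0m (Nat.mod_lt _ h2m) hrr (by rw [htz0, hti2])).symm
  have oneszero : ∀ i, occOnes t (N + 1) i → occZeros s N i := by
    intro i hi k hk
    rw [sxor (i + k)]
    have e : i + k + 1 = i + (k + 1) := by omega
    rw [e, hi k (by omega), hi (k + 1) (by omega)]
    rfl
  have zeroszero : ∀ i, occZeros t (N + 1) i → occZeros s N i := by
    intro i hi k hk
    rw [sxor (i + k)]
    have e : i + k + 1 = i + (k + 1) := by omega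
    rw [e, hi k (by omega), hi (k + 1) (by omega)]
    rfl
  have onesloc : ∀ i, occOnes t (N + 1) i → i % (2 * m) = r := by
    intro i hi
    have h0 : t i = true := by have := hi 0 (by omega); simpa using this
    exact runloc i h0 (oneszero i hi)
  have zerosloc : ∀ i, occZeros t (N + 1) i → i % (2 * m) = z0 := by
    intro i hi
    have h0 : t i = false := by have := hi 0 (by omega); simpa using this
    exact zeroloc i h0 (zeroszero i hi)


  have tbound1 : t (r + (N + 1)) = false := by
    by_contra hb
    have hb' : t (r + (N + 1)) = true := by revert hb; cases t (r + (N + 1)) <;> simp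
    have ho : occOnes t (N + 1) (r + 1) := by
      intro k hk
      rcases Nat.lt_or_ge k N with h | h
      · have e : r + 1 + k = r + (1 + k) := by omega
        rw [e]; exact tones (1 + k) (by omega)
      · have e2 : r + 1 + k = r + (N + 1) := by omega
        rw [e2]; exact hb'
    have hl := onesloc (r + 1) ho
    rcases Nat.lt_or_ge (r + 1) (2 * m) with h | h
    · rw [Nat.mod_eq_of_lt h] at hl; omega
    · have e : r + 1 = 2 * m := by omega
      rw [e, Nat.mod_self] at hl; omega
  have tbound2 : t (r + (2 * m - 1)) = false := by
    by_contra hb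
    have hb' : t (r + (2 * m - 1)) = true := by revert hb; cases t (r + (2 * m - 1)) <;> simp
    have ho : occOnes t (N + 1) (r + (2 * m - 1)) := by
      intro k hk
      rcases Nat.eq_zero_or_pos k with h | h
      · subst h; simpa using hb'
      · have e : r + (2 * m - 1) + k = (r + (k - 1)) + 1 * (2 * m) := by omega
        rw [e, tmul]; exact tones (k - 1) (by omega)
    have hl := onesloc _ ho
    rcases Nat.eq_zero_or_pos r with h | h
    · rw [h, Nat.zero_add, Nat.mod_eq_of_lt (by omega : 2 * m - 1 < 2 * m)] at hl
      omega
    · have e : r + (2 * m - 1) = (r - 1) + 1 * (2 * m) := by omega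
      rw [e, Nat.add_mul_mod_self_right, Nat.mod_eq_of_lt (by omega : r - 1 < 2 * m)] at hl
      omega
  have no12 : ∀ z, ¬ occOnes t (N + 2) z := by
    intro z hz
    have h1 : occOnes t (N + 1) z := fun k hk => hz k (by omega)
    have h2 : occOnes t (N + 1) (z + 1) := by
      intro k hk
      have e : z + 1 + k = z + (1 + k) := by omega
      rw [e]; exact hz (1 + k) (by omega)
    have e1 := onesloc z h1
    have e2 := onesloc (z + 1) h2
    have hdvd : (2 * m) ∣ (z + 1) - z := (Nat.modEq_iff_dvd' (by omega)).mp (by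
      show z % (2 * m) = (z + 1) % (2 * m); rw [e1, e2])
    have : (z + 1) - z = 1 := by omega
    rw [this] at hdvd
    have := Nat.le_of_dvd one_pos hdvd
    omega
  have ts : ∀ x j, x % (2 * m) = r → t (x + j) = t (r + j) := by
    intro x j hx
    obtain ⟨c, hc⟩ : ∃ c, x = 2 * m * c + r := by
      refine ⟨x / (2 * m), ?_⟩
      conv_lhs => rw [← Nat.div_add_mod x (2 * m)]
      rw [hx]
    have e : x + j = (r + j) + c * (2 * m) := by rw [hc]; ring
    rw [e, tmul]
  have tsz : ∀ x j, x % (2 * m) = z0 → t (x + j) = t (z0 + j) := by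
    intro x j hx
    obtain ⟨c, hc⟩ : ∃ c, x = 2 * m * c + z0 := by
      refine ⟨x / (2 * m), ?_⟩
      conv_lhs => rw [← Nat.div_add_mod x (2 * m)]
      rw [hx]
    have e : x + j = (z0 + j) + c * (2 * m) := by rw [hc]; ring
    rw [e, tmul]
  have wtt : wt t (2 * m) = m := by
    have e : 2 * m = m + m := by omega
    rw [wt, e, Finset.sum_range_add, ← Finset.sum_add_distrib]
    have hterm : ∀ i ∈ Finset.range m,
        ((if t i then 1 else 0) + (if t (m + i) then 1 else 0)) = 1 := by
      intro i _
      have e2 : m + i = i + m := by omega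
      rw [e2, tflip i]; cases t i <;> simp
    rw [Finset.sum_congr rfl hterm, Finset.sum_const, Finset.card_range, smul_eq_mul, mul_one]
  have sper : ∀ x q, s (x + q * m) = s x := perMul hsper
  have wshift : ∀ a, (∑ k ∈ Finset.range m, (if s (a + k) then 1 else 0)) = wt s m := by
    intro a
    induction a with
    | zero => simp [wt]
    | succ a ih =>
      rw [← ih]
      have h1 := Finset.sum_range_succ' (fun k => if s (a + k) then (1:ℕ) else 0) m
      have h2 := Finset.sum_range_succ (fun k => if s (a + k) then (1:ℕ) else 0) m
      have h3 : s (a + m) = s a := hsper a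
      have h4 : ∀ k, a + 1 + k = a + (k + 1) := by omega
      have h5 : ∑ k ∈ Finset.range m, (if s (a + 1 + k) then (1:ℕ) else 0)
          = ∑ k ∈ Finset.range m, (if s (a + (k + 1)) then (1:ℕ) else 0) := by
        apply Finset.sum_congr rfl; intro k _; rw [h4 k]
      rw [h3] at h2
      simp only [Nat.add_zero] at h1
      omega
  have mgt : N < m := by
    by_contra hle
    have hle' : m ≤ N := by omega
    have h0 : (∑ k ∈ Finset.range m, (if s (i0 + k) then (1:ℕ) else 0)) = 0 := by
      apply Finset.sum_eq_zero
      intro k hk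
      rw [hi0z k (lt_of_lt_of_le (Finset.mem_range.mp hk) hle')]
      rfl
    rw [wshift i0] at h0
    rw [h0] at hodd
    simp [Nat.odd_iff] at hodd
  have mN1 : m ≠ N + 1 := by
    intro hm
    have sN : s (i0 + N) = true := by
      by_contra hsN
      have hsN' : s (i0 + N) = false := by revert hsN; cases s (i0 + N) <;> simp
      have hz1 : occZeros s N (i0 + 1) := by
        intro k hk
        rcases Nat.lt_or_ge (k + 1) N with h | h
        · have e : i0 + 1 + k = i0 + (k + 1) := by omega
          rw [e]; exact hi0z (k + 1) h
        · have e : i0 + 1 + k = i0 + N := by omega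
          rw [e]; exact hsN'
      have hl := zpos (i0 + 1) hz1
      rcases Nat.lt_or_ge (i0 + 1) m with h | h
      · rw [Nat.mod_eq_of_lt h] at hl; omega
      · have e : i0 + 1 = m := by omega
        rw [e, Nat.mod_self] at hl; omega
    have hval : ∀ k, k ≤ N + 3 → s (i0 + 2 * N + k) = decide (k = 1 ∨ k = N + 2) := by
      intro k hk
      have hk0 : k = 0 ∨ k = 1 ∨ (2 ≤ k ∧ k ≤ N + 1) ∨ k = N + 2 ∨ k = N + 3 := by omega
      have hno : ∀ j : ℕ, j ≤ N + 3 → j ≠ 1 → j ≠ N + 2 → decide (j = 1 ∨ j = N + 2) = false := by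
        intro j _ hj1 hj2; simp [hj1, hj2]
      rcases hk0 with h | h | ⟨h1, h2⟩ | h | h
      · subst h
        have e : i0 + 2 * N + 0 = (i0 + (N - 1)) + 1 * m := by omega
        rw [e, sper, hi0z (N - 1) (by omega), hno 0 (by omega) (by omega) (by omega)]
      · subst h
        have e : i0 + 2 * N + 1 = (i0 + N) + 1 * m := by omega
        rw [e, sper, sN]
        simp
      · have e : i0 + 2 * N + k = (i0 + (k - 2)) + 2 * m := by omega
        rw [e, sper]
        rcases Nat.lt_or_ge (k - 2) N with h | h
        · rw [hi0z (k - 2) h, hno k (by omega) (by omega) (by omega)]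
        · have e2 : k - 2 = N := by omega
          have e3 : k = N + 2 := by omega
          rw [e2, sN]
          simp [e3]
      · subst h
        have e : i0 + 2 * N + (N + 2) = (i0 + N) + 2 * m := by omega
        rw [e, sper, sN]
        simp
      · subst h
        have e : i0 + 2 * N + (N + 3) = i0 + 3 * m := by omega
        have e2 : i0 + 3 * m = (i0 + 0) + 3 * m := by omega
        rw [e, e2, sper]
        rw [hi0z 0 (by omega), hno (N + 3) (by omega) (by omega) (by omega)]
    apply sorient' (i0 + 2 * N) (i0 + 2 * N)
    intro k hk
    rw [hval k (by omega), hval (n - 1 - k) (by omega)]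
    simp only [decide_eq_decide]
    omega
  have hmN2 : N + 2 ≤ m := by omega
  rw [show n + 1 - 4 = N + 1 from by omega]
  refine ⟨r, hrm, (fun k hk => tones k (by omega)), ?_, ?_⟩
  · intro i hi hoi
    have := onesloc i hoi
    rw [Nat.mod_eq_of_lt hi] at this
    exact this
  rcases Nat.even_or_odd m with hme | hmo
  · -- even case
    have hwte : ¬ Odd (wt t (2 * m)) := by
      rw [wtt]; exact (Nat.not_odd_iff_even).mpr hme
    have hmo' : ¬ Odd m := (Nat.not_odd_iff_even).mpr hme
    rw [if_neg hwte, if_neg hmo']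
    set t' := insertAt t (2 * m) r with ht'def
    have t'val : ∀ x, t' x = (if x % (2*m+1) < r then t (x % (2*m+1))
        else if x % (2*m+1) = r then true else t (x % (2*m+1) - 1)) := by
      intro x; rw [ht'def]; rfl
    have t'per : hasPer t' (2*m+1) := by
      intro x
      rw [t'val, t'val, Nat.add_mod_right]
    have t'cong : ∀ x y, x % (2*m+1) = y % (2*m+1) → t' x = t' y :=
      perCong t'per (by omega)
    have t'atr : ∀ x, x % (2*m+1) = r → t' x = true := by
      intro x hx
      rw [t'val, hx, if_neg (by omega), if_pos rfl]
    set v : ℕ → ℕ := fun j => if j ≤ r then j else j - 1 with hvdef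
    set u : ℕ → ℕ := fun x => 2 * m * (x / (2*m+1)) + v (x % (2*m+1)) with hudef
    have vval : ∀ j, v j = if j ≤ r then j else j - 1 := fun j => by rw [hvdef]
    have uval : ∀ x, u x = 2 * m * (x / (2*m+1)) + v (x % (2*m+1)) := fun x => by rw [hudef]
    have vlt : ∀ x, x ≤ 2*m → v x < 2*m := by
      intro x hx; rw [vval]; split <;> omega
    have ulow : ∀ x, x ≤ 2*m → u x = v x := by
      intro x hx
      rw [uval, Nat.div_eq_of_lt (by omega), Nat.mod_eq_of_lt (by omega)]
      ring
    have vinj : ∀ a b, a ≤ 2*m → b ≤ 2*m → v a = v b →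
        a = b ∨ (a = r ∧ b = r + 1) ∨ (a = r + 1 ∧ b = r) := by
      intro a b ha hb hab
      rw [vval, vval] at hab
      revert hab; split <;> split <;> omega
    have tv : ∀ x, t' x = t (u x) := by
      intro x
      have hxm : x % (2*m+1) < 2*m+1 := Nat.mod_lt _ (by omega)
      rw [t'val, uval]
      rcases lt_trichotomy (x % (2*m+1)) r with h | h | h
      · rw [if_pos h, vval, if_pos (by omega)]
        have e : 2*m*(x/(2*m+1)) + x % (2*m+1) = (x % (2*m+1)) + (x/(2*m+1)) * (2*m) := by ring
        rw [e, tmul]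
      · rw [if_neg (by omega), if_pos h, vval, if_pos (by omega), h]
        have e : 2*m*(x/(2*m+1)) + r = r + (x/(2*m+1)) * (2*m) := by ring
        rw [e, tmul, htr]
      · rw [if_neg (by omega), if_neg (by omega), vval, if_neg (by omega)]
        have e : 2*m*(x/(2*m+1)) + (x % (2*m+1) - 1)
            = (x % (2*m+1) - 1) + (x/(2*m+1)) * (2*m) := by ring
        rw [e, tmul]
    have ustep : ∀ x, u (x + 1) = if x % (2*m+1) = r then u x else u x + 1 := by
      intro x
      obtain ⟨q, j, hqj, hj⟩ : ∃ q j, x = (2*m+1)*q + j ∧ j < 2*m+1 :=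
        ⟨x/(2*m+1), x%(2*m+1), by rw [Nat.div_add_mod], Nat.mod_lt _ (by omega)⟩
      have hxm : x % (2*m+1) = j := by
        rw [hqj, Nat.mul_add_mod, Nat.mod_eq_of_lt hj]
      have hxd : x / (2*m+1) = q := by
        rw [hqj, Nat.mul_add_div (by omega), Nat.div_eq_of_lt hj, Nat.add_zero]
      rcases Nat.lt_or_ge j (2*m) with hj2 | hj2
      · have hx1 : x + 1 = (2*m+1)*q + (j+1) := by omega
        have hx1m : (x+1) % (2*m+1) = j + 1 := by
          rw [hx1, Nat.mul_add_mod, Nat.mod_eq_of_lt (by omega)]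
        have hx1d : (x+1) / (2*m+1) = q := by
          rw [hx1, Nat.mul_add_div (by omega), Nat.div_eq_of_lt (by omega), Nat.add_zero]
        rw [uval, uval, hxm, hxd, hx1m, hx1d]
        obtain ⟨w, hw⟩ : ∃ w, w = 2*m*q := ⟨_, rfl⟩
        rw [← hw]
        rcases lt_trichotomy j r with h | h | h
        · rw [if_neg (by omega), vval, if_pos (by omega), vval, if_pos (by omega)]
          omega
        · rw [if_pos h, vval, if_neg (by omega), vval, if_pos (by omega)]
          omega
        · rw [if_neg (by omega), vval, if_neg (by omega), vval, if_neg (by omega)]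
          omega
      · have hj3 : j = 2*m := by omega
        have hx1 : x + 1 = (2*m+1)*(q+1) := by rw [hqj, hj3]; ring
        have hx1m : (x+1) % (2*m+1) = 0 := by
          rw [hx1, Nat.mul_mod_right]
        have hx1d : (x+1) / (2*m+1) = q + 1 := by
          rw [hx1, Nat.mul_div_cancel_left _ (by omega : 0 < 2*m+1)]
        rw [uval, uval, hxm, hxd, hx1m, hx1d, hj3]
        rw [if_neg (by omega), vval, if_pos (by omega), vval, if_neg (by omega)]
        have e : 2*m*(q+1) = 2*m*q + 2*m := by ring
        rw [e]
        obtain ⟨w, hw⟩ : ∃ w, w = 2*m*q := ⟨_, rfl⟩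
        rw [← hw]
        omega
    have ulin : ∀ a d, (∀ k, k < d → (a + k) % (2*m+1) ≠ r) → u (a + d) = u a + d := by
      intro a d
      induction d with
      | zero => intro _; rfl
      | succ d ih =>
        intro h
        have e : a + (d+1) = (a+d) + 1 := by omega
        rw [e, ustep (a+d), if_neg (h d (by omega)), ih (fun k hk => h k (by omega))]
        omega
    have stalluniq : ∀ a d k, d ≤ N + 4 → k ≤ N + 4 →
        (a + d) % (2*m+1) = r → (a + k) % (2*m+1) = r → d = k := by
      have half : ∀ a d k, d ≤ k → k ≤ N + 4 →
          (a + d) % (2*m+1) = r → (a + k) % (2*m+1) = r → d = k := by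
        intro a d k hdk hkn hd hk
        have hdvd : (2*m+1) ∣ (a+k) - (a+d) := (Nat.modEq_iff_dvd' (by omega)).mp (by
          show (a+d) % (2*m+1) = (a+k) % (2*m+1); rw [hd, hk])
        have e : (a+k) - (a+d) = k - d := by omega
        rw [e] at hdvd
        rcases Nat.eq_zero_or_pos (k - d) with h | h
        · omega
        · have := Nat.le_of_dvd h hdvd
          omega
      intro a d k hdn hkn hd hk
      rcases le_total d k with h | h
      · exact half a d k h hkn hd hk
      · exact (half a k d h hdn hk hd).symm
    have umodr : ∀ x, x % (2*m+1) = r → (u x) % (2*m) = r := by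
      intro x hx
      rw [uval, hx, vval, if_pos (le_refl r)]
      obtain ⟨q, hq⟩ : ∃ q, q = x / (2*m+1) := ⟨_, rfl⟩
      rw [← hq, Nat.mul_add_mod, Nat.mod_eq_of_lt hrm]
    have Wno : ∀ a, (∀ k, k < n → (a + k) % (2*m+1) ≠ r) →
        ∀ k, k ≤ n → t' (a + k) = t (u a + k) := by
      intro a h k hk
      rw [tv, ulin a k (fun k' hk' => h k' (by omega))]
    have Wst1 : ∀ a d, d < n → (a + d) % (2*m+1) = r →
        ∀ k, k ≤ d → t' (a + k) = t (u a + k) := by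
      intro a d hd hstall k hk
      rw [tv, ulin a k (fun k' hk' => by
        intro hc
        have := stalluniq a k' d (by omega) (by omega) hc hstall
        omega)]
    have Wst2 : ∀ a d, d < n → (a + d) % (2*m+1) = r →
        ∀ k, d < k → k ≤ n → t' (a + k) = t (u a + (k - 1)) := by
      intro a d hd hstall k hk1 hk2
      have h1 : u (a + d) = u a + d := by
        apply ulin
        intro k' hk' hc
        have := stalluniq a k' d (by omega) (by omega) hc hstall
        omega
      have h2 : u ((a + d) + 1) = u (a + d) := by
        rw [ustep (a + d), if_pos hstall]
      have h3 : u ((a + d + 1) + (k - d - 1)) = u (a + d + 1) + (k - d - 1) := by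
        apply ulin
        intro k' hk' hc
        have e : a + d + 1 + k' = a + (d + 1 + k') := by omega
        rw [e] at hc
        have := stalluniq a (d + 1 + k') d (by omega) (by omega) hc hstall
        omega
      have e : a + k = (a + d + 1) + (k - d - 1) := by omega
      rw [tv, e, h3, h2, h1]
      congr 1
      omega
    have hstall_mod : ∀ a d, (a + d) % (2*m+1) = r → (u a + d) % (2*m) = r → True := fun _ _ _ _ => trivial
    have Bones : ∀ a d, d ≤ 3 → (a + d) % (2*m+1) = r → (u a + d) % (2*m) = r →
        ∀ j, j ≤ N + 1 → t' (a + (d + j)) = true := by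
      intro a d hd3 hstall hmod j hj
      rcases Nat.eq_zero_or_pos j with h0 | h0
      · rw [h0, Nat.add_zero]
        exact t'atr _ hstall
      · rw [Wst2 a d (by omega) hstall (d + j) (by omega) (by omega)]
        have e : u a + (d + j - 1) = (u a + d) + (j - 1) := by omega
        rw [e, ts _ _ hmod]
        exact tones (j - 1) (by omega)
    have bfalse : ∀ y, 1 ≤ y → y % (2*m) = r → t (y - 1) = false := by
      intro y hy hmod
      obtain ⟨c, hc⟩ : ∃ c, y = c * (2*m) + r := by
        refine ⟨y / (2*m), ?_⟩
        conv_lhs => rw [← Nat.div_add_mod y (2*m)]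
        rw [hmod]; ring
      obtain ⟨w, hw⟩ : ∃ w, w = c * (2*m) := ⟨_, rfl⟩
      rw [← hw] at hc
      have e : (y - 1) + 1 * (2*m) = (r + (2*m - 1)) + w := by omega
      rw [← tmul (y-1) 1, e, hw, tmul, tbound2]
    have bsub2 : ∀ y, 2 ≤ y → y % (2*m) = r → t (y - 2) = t (r + (2*m - 2)) := by
      intro y hy hmod
      obtain ⟨c, hc⟩ : ∃ c, y = c * (2*m) + r := by
        refine ⟨y / (2*m), ?_⟩
        conv_lhs => rw [← Nat.div_add_mod y (2*m)]
        rw [hmod]; ring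
      obtain ⟨w, hw⟩ : ∃ w, w = c * (2*m) := ⟨_, rfl⟩
      rw [← hw] at hc
      have e : (y - 2) + 1 * (2*m) = (r + (2*m - 2)) + w := by omega
      rw [← tmul (y-2) 1, e, hw, tmul]
    have classify : ∀ a, a ≤ 2*m →
        ((∀ k, k ≤ n → t' (a + k) = t (v a + k)) ∧ a ≠ r)
        ∨ (∃ d, d ≤ 3 ∧ (a + d) % (2*m+1) = r
            ∧ (∀ k, k ≤ d → t' (a + k) = t (v a + k))
            ∧ (∀ k, d < k → k ≤ n → t' (a + k) = t (v a + (k - 1)))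
            ∧ (v a + d) % (2*m) = r) := by
      intro a ha
      have hu : u a = v a := ulow a ha
      by_cases hex : ∃ d, d < n ∧ (a + d) % (2*m+1) = r
      · obtain ⟨d, hdn, hstall⟩ := hex
        have hmod : (v a + d) % (2*m) = r := by
          rw [← hu]
          have h1 : u (a + d) = u a + d := by
            apply ulin
            intro k' hk' hc
            have := stalluniq a k' d (by omega) (by omega) hc hstall
            omega
          rw [← h1]
          exact umodr _ hstall
        rcases Nat.lt_or_ge d 4 with hd4 | hd4
        · right
          exact ⟨d, by omega, hstall, fun k hk => by rw [Wst1 a d hdn hstall k hk, hu],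
            fun k hk1 hk2 => by rw [Wst2 a d hdn hstall k hk1 hk2, hu], hmod⟩
        · left
          constructor
          · intro k hk
            rcases le_or_gt k d with h | h
            · rw [Wst1 a d hdn hstall k h, hu]
            · rw [Wst2 a d hdn hstall k h hk, hu]
              have e1 : v a + (k - 1) = (v a + d) + (k - 1 - d) := by omega
              have e2 : v a + k = (v a + d) + (k - d) := by omega
              rw [e1, e2, ts _ _ hmod, ts _ _ hmod]
              rw [tones (k - 1 - d) (by omega), tones (k - d) (by omega)]
          · intro hc
            have h0 : (a + 0) % (2*m+1) = r := by
              rw [Nat.add_zero, Nat.mod_eq_of_lt (by omega), hc]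
            have := stalluniq a 0 d (by omega) (by omega) h0 hstall
            omega
      · left
        push_neg at hex
        constructor
        · intro k hk
          rw [Wno a (fun k' hk' => hex k' hk') k hk, hu]
        · intro hc
          exact hex 0 (by omega) (by rw [Nat.add_zero, Nat.mod_eq_of_lt (by omega), hc])
    have t'win0 : ∀ a b, a ≤ 2*m → b ≤ 2*m →
        (∀ k, k ≤ n → t' (a + k) = t' (b + k)) → a = b := by
      intro a b ha hb hE
      rcases classify a ha with ⟨hWa, har⟩ | ⟨da, hda3, hsa, hWa1, hWa2, hma⟩
      · rcases classify b hb with ⟨hWb, hbr⟩ | ⟨db, hdb3, hsb, hWb1, hWb2, hmb⟩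
        · have h := twin (v a) (v b) (fun k hk => by
            rw [← hWa k hk, hE k hk, hWb k hk])
          have hva := vlt a ha
          have hvb := vlt b hb
          have hvv : v a = v b := by
            rw [Nat.mod_eq_of_lt hva, Nat.mod_eq_of_lt hvb] at h
            exact h
          rcases vinj a b ha hb hvv with h1 | ⟨h1, h2⟩ | ⟨h1, h2⟩
          · exact h1
          · exact absurd h1 har
          · exact absurd h2 hbr
        · exfalso
          apply no12 (v a + db)
          intro j hj
          have e : v a + db + j = v a + (db + j) := by omega
          rw [e, ← hWa (db + j) (by omega), hE (db + j) (by omega)]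
          exact Bones b db hdb3 hsb (by rw [ulow b hb]; exact hmb) j (by omega)
      · rcases classify b hb with ⟨hWb, hbr⟩ | ⟨db, hdb3, hsb, hWb1, hWb2, hmb⟩
        · exfalso
          apply no12 (v b + da)
          intro j hj
          have e : v b + da + j = v b + (da + j) := by omega
          rw [e, ← hWb (da + j) (by omega), ← hE (da + j) (by omega)]
          exact Bones a da hda3 hsa (by rw [ulow a ha]; exact hma) j (by omega)
        · have hdd : da = db := by
            rcases lt_trichotomy da db with hlt | heq | hgt
            · exfalso
              have h1 : t' (b + (db - 1)) = t (v b + (db - 1)) := hWb1 (db - 1) (by omega)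
              have h2 : t (v b + (db - 1)) = false := by
                have e : v b + (db - 1) = (v b + db) - 1 := by omega
                rw [e]
                exact bfalse (v b + db) (by omega) hmb
              have h3 : t' (a + (db - 1)) = true := by
                have e : a + (db - 1) = a + (da + (db - 1 - da)) := by omega
                rw [e]
                exact Bones a da hda3 hsa (by rw [ulow a ha]; exact hma) (db - 1 - da) (by omega)
              have h4 := hE (db - 1) (by omega)
              rw [h3, h1, h2] at h4
              exact absurd h4 (by simp)
            · exact heq
            · exfalso
              have h1 : t' (a + (da - 1)) = t (v a + (da - 1)) := hWa1 (da - 1) (by omega)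
              have h2 : t (v a + (da - 1)) = false := by
                have e : v a + (da - 1) = (v a + da) - 1 := by omega
                rw [e]
                exact bfalse (v a + da) (by omega) hma
              have h3 : t' (b + (da - 1)) = true := by
                have e : b + (da - 1) = b + (db + (da - 1 - db)) := by omega
                rw [e]
                exact Bones b db hdb3 hsb (by rw [ulow b hb]; exact hmb) (da - 1 - db) (by omega)
              have h4 := hE (da - 1) (by omega)
              rw [h3, h1, h2] at h4
              exact absurd h4 (by simp)
          rw [← hdd] at hsb hmb
          have hvv : v a = v b := by
            have h1 : (v a + da) % (2*m) = (v b + da) % (2*m) := by rw [hma, hmb]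
            have h2 : v a % (2*m) = v b % (2*m) := Nat.ModEq.add_right_cancel' da h1
            rw [Nat.mod_eq_of_lt (vlt a ha), Nat.mod_eq_of_lt (vlt b hb)] at h2
            exact h2
          rcases vinj a b ha hb hvv with h1 | ⟨h1, h2⟩ | ⟨h1, h2⟩
          · exact h1
          · exfalso
            have h0 : (a + 0) % (2*m+1) = r := by
              rw [Nat.add_zero, Nat.mod_eq_of_lt (by omega), h1]
            have hda0 : 0 = da := stalluniq a 0 da (by omega) (by omega) h0 hsa
            have hbr : b = r := by
              have hx := hsb
              rw [← hda0, Nat.add_zero, Nat.mod_eq_of_lt (by omega)] at hx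
              exact hx
            omega
          · exfalso
            have h0 : (b + 0) % (2*m+1) = r := by
              rw [Nat.add_zero, Nat.mod_eq_of_lt (by omega), h2]
            have hdb0 : 0 = da := stalluniq b 0 da (by omega) (by omega) h0 hsb
            have har2 : a = r := by
              have hx := hsa
              rw [← hdb0, Nat.add_zero, Nat.mod_eq_of_lt (by omega)] at hx
              exact hx
            omega
    have t'winMod : ∀ i j, (∀ k, k ≤ n → t' (i + k) = t' (j + k)) →
        i % (2*m+1) = j % (2*m+1) := by
      intro i j h
      have hi : i % (2*m+1) ≤ 2*m := by
        have := Nat.mod_lt i (show 0 < 2*m+1 by omega); omega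
      have hj : j % (2*m+1) ≤ 2*m := by
        have := Nat.mod_lt j (show 0 < 2*m+1 by omega); omega
      apply t'win0 _ _ hi hj
      intro k hk
      have e1 : t' (i % (2*m+1) + k) = t' (i + k) :=
        t'cong _ _ ((Nat.mod_modEq i (2*m+1)).add_right k)
      have e2 : t' (j % (2*m+1) + k) = t' (j + k) :=
        t'cong _ _ ((Nat.mod_modEq j (2*m+1)).add_right k)
      rw [e1, e2]
      exact h k hk
    have revswap : ∀ a b, (∀ k, k ≤ n → t' (a + k) = t' (b + (n - k))) →
        (∀ k, k ≤ n → t' (b + k) = t' (a + (n - k))) := by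
      intro a b h k hk
      have h2 := h (n - k) (by omega)
      rw [show n - (n - k) = k from by omega] at h2
      exact h2.symm
    have corBB : ∀ a b da db, a ≤ 2*m → b ≤ 2*m → da ≤ 3 → db ≤ 3 → da + db = 3 → da ≤ 1 →
        (a + da) % (2*m+1) = r → (v a + da) % (2*m) = r →
        (∀ k, da < k → k ≤ n → t' (a + k) = t (v a + (k - 1))) →
        (∀ k, k ≤ db → t' (b + k) = t (v b + k)) →
        (v b + db) % (2*m) = r →
        (∀ k, k ≤ n → t' (a + k) = t' (b + (n - k))) → False := by
      intro a b da db ha hb hda3 hdb3 hsum hda1 hsa hma hWa2 hWb1 hmb hE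
      have hk1 : da + N + 3 ≤ n := by omega
      have hL : t' (a + (da + N + 3)) = t (r + (N + 2)) := by
        rw [hWa2 (da + N + 3) (by omega) hk1]
        have e : v a + (da + N + 3 - 1) = (v a + da) + (N + 2) := by omega
        rw [e, ts _ _ hma]
      have hR : t' (b + (n - (da + N + 3))) = t (r + (2*m - 2)) := by
        have e0 : n - (da + N + 3) = db - 2 := by omega
        rw [e0, hWb1 (db - 2) (by omega)]
        have e : v b + (db - 2) = (v b + db) - 2 := by omega
        rw [e]
        exact bsub2 (v b + db) (by omega) hmb
      have heq : t (r + (N + 2)) = t (r + (2*m - 2)) := by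
        rw [← hL, ← hR]
        exact hE (da + N + 3) hk1
      have hsv : ∀ k, k ≤ N + 3 → s ((r + (2*m - 2)) + k)
          = (if k = 0 ∨ k = N + 3 then t (r + (2*m - 2))
             else if k = 1 ∨ k = N + 2 then true else false) := by
        intro k hk
        have tval : ∀ j, 2 ≤ j → t ((r + (2*m-2)) + j) = t (r + (j - 2)) := by
          intro j h2
          have e : (r + (2*m-2)) + j = (r + (j - 2)) + 1 * (2*m) := by omega
          rw [e, tmul]
        have hk0 : k = 0 ∨ k = 1 ∨ (2 ≤ k ∧ k ≤ N + 1) ∨ k = N + 2 ∨ k = N + 3 := by omega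
        rcases hk0 with h | h | ⟨hh1, hh2⟩ | h | h
        · subst h
          rw [Nat.add_zero, sxor (r + (2*m-2))]
          rw [show (r + (2*m-2)) + 1 = r + (2*m-1) from by omega, tbound2, Bool.xor_false]
          rw [if_pos (Or.inl rfl)]
        · subst h
          rw [sxor ((r + (2*m-2)) + 1)]
          rw [show (r + (2*m-2)) + 1 = r + (2*m-1) from by omega, tbound2]
          rw [show (r + (2*m-1)) + 1 = (r + (2*m-2)) + 2 from by omega, tval 2 (by omega)]
          rw [show (2:ℕ) - 2 = 0 from rfl, Nat.add_zero, htr]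
          rw [if_neg (by omega), if_pos (Or.inl rfl)]
          rfl
        · rw [sxor ((r + (2*m-2)) + k)]
          rw [tval k (by omega)]
          rw [show (r + (2*m-2)) + k + 1 = (r + (2*m-2)) + (k+1) from by omega,
              tval (k+1) (by omega)]
          rw [tones (k - 2) (by omega), tones (k + 1 - 2) (by omega)]
          rw [if_neg (by omega), if_neg (by omega)]
          rfl
        · subst h
          rw [sxor ((r + (2*m-2)) + (N+2))]
          rw [tval (N+2) (by omega)]
          rw [show (r + (2*m-2)) + (N+2) + 1 = (r + (2*m-2)) + (N+3) from by omega,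
              tval (N+3) (by omega)]
          rw [show N + 2 - 2 = N from by omega, show N + 3 - 2 = N + 1 from by omega]
          rw [tones N (by omega), tbound1]
          rw [if_neg (by omega), if_pos (Or.inr rfl)]
          rfl
        · subst h
          rw [sxor ((r + (2*m-2)) + (N+3))]
          rw [tval (N+3) (by omega)]
          rw [show (r + (2*m-2)) + (N+3) + 1 = (r + (2*m-2)) + (N+4) from by omega,
              tval (N+4) (by omega)]
          rw [show N + 3 - 2 = N + 1 from by omega, show N + 4 - 2 = N + 2 from by omega]
          rw [tbound1, heq, Bool.false_xor]
          rw [if_pos (Or.inr rfl)]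
      apply sorient' (r + (2*m-2)) (r + (2*m-2))
      intro k hk
      rw [hsv k (by omega), hsv (n - 1 - k) (by omega)]
      exact if_congr (by omega) rfl (if_congr (by omega) rfl rfl)
    have t'orient0 : ∀ a b, a ≤ 2*m → b ≤ 2*m →
        (∀ k, k ≤ n → t' (a + k) = t' (b + (n - k))) → False := by
      intro a b ha hb hE
      rcases classify a ha with ⟨hWa, _⟩ | ⟨da, hda3, hsa, hWa1, hWa2, hma⟩
      · rcases classify b hb with ⟨hWb, _⟩ | ⟨db, hdb3, hsb, hWb1, hWb2, hmb⟩
        · apply torient (v a) (v b)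
          intro k hk
          rw [← hWa k hk, ← hWb (n - k) (by omega)]
          exact hE k hk
        · apply no12 (v a + (n - db - (N+1)))
          intro j hj
          have e : v a + (n - db - (N+1)) + j = v a + (n - (db + (N+1-j))) := by omega
          rw [e, ← hWa _ (by omega), hE (n - (db + (N+1-j))) (by omega)]
          rw [show n - (n - (db + (N+1-j))) = db + (N+1-j) from by omega]
          exact Bones b db hdb3 hsb (by rw [ulow b hb]; exact hmb) (N+1-j) (by omega)
      · rcases classify b hb with ⟨hWb, _⟩ | ⟨db, hdb3, hsb, hWb1, hWb2, hmb⟩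
        · have hE' := revswap a b hE
          apply no12 (v b + (n - da - (N+1)))
          intro j hj
          have e : v b + (n - da - (N+1)) + j = v b + (n - (da + (N+1-j))) := by omega
          rw [e, ← hWb _ (by omega), hE' (n - (da + (N+1-j))) (by omega)]
          rw [show n - (n - (da + (N+1-j))) = da + (N+1-j) from by omega]
          exact Bones a da hda3 hsa (by rw [ulow a ha]; exact hma) (N+1-j) (by omega)
        · have hsum : da + db = 3 := by
            rcases lt_trichotomy (da + db) 3 with hlt | heq | hgt
            · exfalso
              have hA : t' (a + (2 - db)) = true := by
                have e : a + (2 - db) = a + (da + (2 - db - da)) := by omega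
                rw [e]
                exact Bones a da hda3 hsa (by rw [ulow a ha]; exact hma) (2 - db - da) (by omega)
              have hB : t' (b + (n - (2 - db))) = false := by
                have e0 : n - (2 - db) = db + (N + 2) := by omega
                rw [e0, hWb2 (db + (N+2)) (by omega) (by omega)]
                have e : v b + (db + (N+2) - 1) = (v b + db) + (N+1) := by omega
                rw [e, ts _ _ hmb]
                exact tbound1
              have h4 := hE (2 - db) (by omega)
              rw [hA, hB] at h4
              exact absurd h4 (by simp)
            · exact heq
            · exfalso
              have hA : t' (a + (da - 1)) = false := by
                rw [hWa1 (da - 1) (by omega)]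
                have e : v a + (da - 1) = (v a + da) - 1 := by omega
                rw [e]
                exact bfalse (v a + da) (by omega) hma
              have hB : t' (b + (n - (da - 1))) = true := by
                rcases eq_or_lt_of_le (show db ≤ n - (da - 1) by omega) with he | hlt2
                · rw [← he]
                  exact t'atr _ hsb
                · rw [hWb2 (n - (da - 1)) hlt2 (by omega)]
                  have e : v b + (n - (da - 1) - 1) = (v b + db) + (N + 4 - da - db) := by omega
                  rw [e, ts _ _ hmb]
                  exact tones (N + 4 - da - db) (by omega)
              have h4 := hE (da - 1) (by omega)
              rw [hA, hB] at h4
              exact absurd h4 (by simp)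
          rcases le_or_gt da 1 with h1 | h1
          · exact corBB a b da db ha hb hda3 hdb3 hsum h1 hsa hma hWa2 hWb1 hmb hE
          · exact corBB b a db da hb ha hdb3 hda3 (by omega) (by omega) hsb hmb hWb2 hWa1 hma
              (revswap a b hE)
    set z1 := if z0 < r then z0 else z0 + 1 with hz1def
    have hz0r : z0 ≠ r := by
      intro h
      have h2 := htr
      rw [← h, htz0] at h2
      exact absurd h2 (by simp)
    have hz1m : z1 ≤ 2*m := by rw [hz1def]; split <;> omega
    have hvz1 : v z1 = z0 := by
      rw [hz1def]; split
      · rw [vval, if_pos (by omega)]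
      · rw [vval, if_neg (by omega)]
        omega
    have huz1 : u z1 = z0 := by rw [ulow z1 hz1m, hvz1]
    have hz1zeros : ∀ k, k ≤ N → u (z1 + k) = z0 + k ∧ t' (z1 + k) = false := by
      intro k
      induction k with
      | zero =>
        intro _
        have h1 : u (z1 + 0) = z0 + 0 := by rw [Nat.add_zero, Nat.add_zero, huz1]
        refine ⟨h1, ?_⟩
        rw [tv, h1, Nat.add_zero]
        exact tzeros 0 (by omega)
      | succ k ih =>
        intro hk
        obtain ⟨ih1, ih2⟩ := ih (by omega)
        have hnostall : (z1 + k) % (2*m+1) ≠ r := by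
          intro hc
          have h2 := t'atr _ hc
          rw [ih2] at h2
          exact absurd h2 (by simp)
        have h1 : u (z1 + (k+1)) = z0 + (k+1) := by
          rw [show z1 + (k+1) = (z1 + k) + 1 from by omega, ustep, if_neg hnostall, ih1]
          omega
        refine ⟨h1, ?_⟩
        rw [tv, h1]
        exact tzeros (k+1) (by omega)
    have hwt' : wt t' (2*m+1) = m + 1 := by
      have h1 : ∀ j ∈ Finset.range r, (if t' j then (1:ℕ) else 0) = (if t j then 1 else 0) := by
        intro j hj
        have hj' := Finset.mem_range.mp hj
        have h2 : t' j = t j := by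
          rw [t'val, Nat.mod_eq_of_lt (by omega), if_pos hj']
        rw [h2]
      have h2 : ∀ j ∈ Finset.range (2*m - r),
          (if t' (r + (1 + j)) then (1:ℕ) else 0) = (if t (r + j) then 1 else 0) := by
        intro j hj
        have hj' := Finset.mem_range.mp hj
        have h3 : t' (r + (1 + j)) = t (r + j) := by
          rw [t'val, Nat.mod_eq_of_lt (by omega), if_neg (by omega), if_neg (by omega)]
          congr 1
          omega
        rw [h3]
      have e1 : 2*m+1 = r + (1 + (2*m - r)) := by omega
      rw [wt, e1, Finset.sum_range_add, Finset.sum_range_add]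
      rw [Finset.sum_congr rfl h1, Finset.sum_congr rfl h2, Finset.sum_range_one]
      have h3 : t' (r + 0) = true := t'atr _ (by rw [Nat.add_zero, Nat.mod_eq_of_lt (by omega)])
      rw [h3]
      have h4 : (∑ j ∈ Finset.range r, if t j then (1:ℕ) else 0)
          + (∑ j ∈ Finset.range (2*m - r), if t (r + j) then (1:ℕ) else 0) = wt t (2*m) := by
        rw [wt]
        conv_rhs => rw [show 2*m = r + (2*m - r) from by omega]
        rw [Finset.sum_range_add]
      rw [wtt] at h4
      simp only [if_true]
      omega
    refine ⟨⟨⟨⟨⟨by omega, t'per, ?_⟩, ?_⟩, ?_⟩, ?_⟩, ?_⟩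
    · intro k hk hpk
      have h0 := t'winMod 0 k (fun k' _ => by
        rw [Nat.zero_add, Nat.add_comm k k']
        exact (hpk k').symm)
      rw [Nat.zero_mod] at h0
      exact Nat.le_of_dvd hk (Nat.dvd_of_mod_eq_zero h0.symm)
    · intro i j hij
      exact t'winMod i j (fun k hk => tup_eq_iff.mp hij k (by omega))
    · intro i j hij
      have hE : ∀ k, k ≤ n → t' (i % (2*m+1) + k) = t' (j % (2*m+1) + (n - k)) := by
        intro k hk
        have e1 : t' (i % (2*m+1) + k) = t' (i + k) :=
          t'cong _ _ ((Nat.mod_modEq i _).add_right k)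
        have e2 : t' (j % (2*m+1) + (n-k)) = t' (j + (n-k)) :=
          t'cong _ _ ((Nat.mod_modEq j _).add_right (n-k))
        rw [e1, e2]
        have h2 := tup_rev_eq_iff.mp hij k (by omega)
        rw [show n + 1 - 1 - k = n - k from by omega] at h2
        exact h2
      exact t'orient0 _ _ (by have := Nat.mod_lt i (show 0 < 2*m+1 by omega); omega)
        (by have := Nat.mod_lt j (show 0 < 2*m+1 by omega); omega) hE
    · rw [show n + 1 - 4 = N + 1 from by omega]
      refine ⟨z1, ⟨by omega, fun k hk => (hz1zeros k (by omega)).2⟩, ?_⟩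
      intro y hy
      obtain ⟨hym, hyz⟩ := hy
      have hnostall : ∀ k, k ≤ N → (y + k) % (2*m+1) ≠ r := by
        intro k hk hc
        have h2 := t'atr _ hc
        rw [hyz k (by omega)] at h2
        exact absurd h2 (by simp)
      have hz : occZeros t (N+1) (u y) := by
        intro k hk
        have h2 : t' (y + k) = t (u y + k) := by
          rw [tv, ulin y k (fun k' hk' => hnostall k' (by omega))]
        rw [← h2]
        exact hyz k hk
      have hloc := zerosloc (u y) hz
      have huy : u y = v y := ulow y (by omega)
      have huyl : v y < 2*m := vlt y (by omega)
      rw [huy, Nat.mod_eq_of_lt huyl] at hloc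
      have hvv : v y = v z1 := by rw [hloc, hvz1]
      rcases vinj y z1 (by omega) hz1m hvv with h1 | ⟨h1, h2⟩ | ⟨h1, h2⟩
      · exact h1
      · exact absurd (by rw [Nat.add_zero, Nat.mod_eq_of_lt (by omega), h1] :
          (y + 0) % (2*m+1) = r) (hnostall 0 (by omega))
      · exfalso
        apply hz0r
        rw [← hvz1, h2, vval, if_pos (le_refl r)]
    · rw [hwt']
      exact Even.add_one hme
  · -- odd case
    have hify : (if Odd (wt t (2 * m)) then t else insertAt t (2 * m) r) = t := by
      rw [wtt]; exact if_pos hmo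
    have hifp : (if Odd m then 2 * m else 2 * m + 1) = 2 * m := if_pos hmo
    rw [hify, hifp]
    refine ⟨⟨⟨⟨⟨by omega, tper, ?_⟩, ?_⟩, ?_⟩, ?_⟩, ?_⟩
    · intro k hk hpk
      have h0 := twin 0 k (fun k' _ => by
        rw [Nat.zero_add, Nat.add_comm k k']
        exact (hpk k').symm)
      rw [Nat.zero_mod] at h0
      exact Nat.le_of_dvd hk (Nat.dvd_of_mod_eq_zero h0.symm)
    · intro i j hij
      exact twin i j (fun k hk => tup_eq_iff.mp hij k (by omega))
    · intro i j hij
      apply torient i j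
      intro k hk
      have h2 := tup_rev_eq_iff.mp hij k (by omega)
      rw [show n + 1 - 1 - k = n - k from by omega] at h2
      exact h2
    · rw [show n + 1 - 4 = N + 1 from by omega]
      refine ⟨z0, ⟨hz0m, fun k hk => tzeros k (by omega)⟩, ?_⟩
      intro y hy
      have h2 := zerosloc y hy.2
      rw [Nat.mod_eq_of_lt hy.1] at h2
      exact h2
    · rw [wtt]; exact hmo
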